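/- Let Γ ⊆ ℝ^d be a set (the patch interface). Nodes are indexed by pairs (m, n) ∈ I_ξ × I_η with I_ξ, I_η finite, and j₀ ∈ I_η is the interface index. For each α ∈ {1, 2}, let ξ^α, η^α : ℝ^d → ℝ be the parametric coordinate maps of patch α, with parametric nodal values ξ^α_m (m ∈ I_ξ) and η^α_n (n ∈ I_η), and suppose η^α(x) = η^α_{j₀} for all x ∈ Γ. Let N^{ξ,α}_i, N^{η,α}_j : ℝ → ℝ be 1D FEM shape functions and W^{ξ,α}_{i,m}, W^{η,α}_{j,n} : ℝ → ℝ 1D convolution patch functions satisfying N^{η,α}_j(η^α_{j₀}) = δ_{j j₀} and W^{η,α}_{j,n}(η^α_{j₀}) = δ_{n j₀} for all j, n, and let ρ^α : ℝ² → ℝ be positive with ρ^α(ξ, η^α_{j₀}) = 1 for all ξ ∈ ℝ. Define the 2D shape functions N^α_{(i,j)}(x) = N^{ξ,α}_i(ξ^α(x)) · N^{η,α}_j(η^α(x)) and convolution patch functions W^α_{(i,j),(m,n)}(x) = (ρ^α(ξ^α_m, η^α_n)/ρ^α(ξ^α(x), η^α(x))) · W^{ξ,α}_{i,m}(ξ^α(x))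 · W^{η,α}_{j,n}(η^α(x)). If the ξ-direction factors of the two patches match at the interface, i.e., for all x ∈ Γ and all i, m: N^{ξ,1}_i(ξ^1(x)) = N^{ξ,2}_i(ξ^2(x)) and W^{ξ,1}_{i,m}(ξ^1(x)) = W^{ξ,2}_{i,m}(ξ^2(x)), then for all x ∈ Γ: (C1) N^1_{(i,j₀)}(x) = N^2_{(i,j₀)}(x) for all i, and N^α_{(i,j)}(x) = 0 whenever j ≠ j₀; (C2) W^1_{(i,j₀),(m,j₀)}(x) = W^2_{(i,j₀),(m,j₀)}(x) for all i, m; (C3) W^α_{(i,j),(m,n)}(x) = 0 whenever n ≠ j₀. -/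
import Mathlib


/-- Theorem 3 of the paper: for C-IGA shape functions built by the product rule
over regular parametric meshes, matching of the 1D ξ-direction factors of the two
patches at the interface implies the three G⁰ compatibility conditions (C1)–(C3)
of Theorem 2. -/
theorem product_rule_G0_compatibility
    {d : ℕ} (Γ : Set (EuclideanSpace ℝ (Fin d)))
    {Iξ Iη : Type*} [Fintype Iξ] [Fintype Iη] [DecidableEq Iη]
    (j₀ : Iη)
    -- parametric coordinate maps of the two patches
    (ξmap ηmap : Fin 2 → EuclideanSpace ℝ (Fin d) → ℝ)
    -- parametric nodal values
    (ξnod : Fin 2 → Iξ → ℝ) (ηnod : Fin 2 → Iη → ℝ)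
    -- every physical interface point has η-parametric coordinate η^α_{j₀}
    (hηΓ : ∀ α : Fin 2, ∀ x ∈ Γ, ηmap α x = ηnod α j₀)
    -- 1D FEM shape functions and 1D convolution patch functions
    (Nξ : Fin 2 → Iξ → ℝ → ℝ) (Nη : Fin 2 → Iη → ℝ → ℝ)
    (Wξ : Fin 2 → Iξ → Iξ → ℝ → ℝ) (Wη : Fin 2 → Iη → Iη → ℝ → ℝ)
    -- Kronecker delta property of the η-direction factors at the interface
    (hNη : ∀ α : Fin 2, ∀ j : Iη, Nη α j (ηnod α j₀) = if j = j₀ then 1 else 0)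
    (hWη : ∀ α : Fin 2, ∀ j n : Iη, Wη α j n (ηnod α j₀) = if n = j₀ then 1 else 0)
    -- positive weighting factor, normalized to 1 on the interface
    (ρ : Fin 2 → ℝ → ℝ → ℝ)
    (hρpos : ∀ α : Fin 2, ∀ ξ η : ℝ, 0 < ρ α ξ η)
    (hρΓ : ∀ α : Fin 2, ∀ ξ : ℝ, ρ α ξ (ηnod α j₀) = 1)
    -- 2D shape functions and convolution patch functions built by the product rule
    (N : Fin 2 → Iξ × Iη → EuclideanSpace ℝ (Fin d) → ℝ)
    (W : Fin 2 → Iξ × Iη → Iξ × Iη → EuclideanSpace ℝ (Fin d) → ℝ)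
    (hNdef : ∀ (α : Fin 2) (i : Iξ) (j : Iη) (x : EuclideanSpace ℝ (Fin d)),
      N α (i, j) x = Nξ α i (ξmap α x) * Nη α j (ηmap α x))
    (hWdef : ∀ (α : Fin 2) (i m : Iξ) (j n : Iη) (x : EuclideanSpace ℝ (Fin d)),
      W α (i, j) (m, n) x =
        ρ α (ξnod α m) (ηnod α n) / ρ α (ξmap α x) (ηmap α x) *
          Wξ α i m (ξmap α x) * Wη α j n (ηmap α x))
    -- matching of the ξ-direction factors of the two patches at the interface
    (hmatchN : ∀ x ∈ Γ, ∀ i : Iξ, Nξ 0 i (ξmap 0 x) = Nξ 1 i (ξmap 1 x))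
    (hmatchW : ∀ x ∈ Γ, ∀ i m : Iξ, Wξ 0 i m (ξmap 0 x) = Wξ 1 i m (ξmap 1 x)) :
    ∀ x ∈ Γ,
      -- (C1)
      ((∀ i : Iξ, N 0 (i, j₀) x = N 1 (i, j₀) x) ∧
        (∀ (α : Fin 2) (i : Iξ) (j : Iη), j ≠ j₀ → N α (i, j) x = 0)) ∧
      -- (C2)
      (∀ i m : Iξ, W 0 (i, j₀) (m, j₀) x = W 1 (i, j₀) (m, j₀) x) ∧
      -- (C3)
      (∀ (α : Fin 2) (i m : Iξ) (j n : Iη), n ≠ j₀ → W α (i, j) (m, n) x = 0) := by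
  intro x hx
  refine ⟨⟨?_, ?_⟩, ?_, ?_⟩
  · intro i
    rw [hNdef, hNdef, hηΓ 0 x hx, hηΓ 1 x hx, hNη, hNη, hmatchN x hx i]
  · intro α i j hj
    rw [hNdef, hηΓ α x hx, hNη, if_neg hj, mul_zero]
  · intro i m
    rw [hWdef, hWdef, hηΓ 0 x hx, hηΓ 1 x hx, hWη, hWη, hρΓ, hρΓ, hρΓ, hρΓ,
      hmatchW x hx i m]
  · intro α i m j n hn
    rw [hWdef, hηΓ α x hx, hWη, if_neg hn, mul_zero]
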